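/- With μ, i, the blocks B_1, …, B_i, the block sizes l_j, and the counting function c_n as in the context, the identity (∑_{n ≥ 0} c_n t^n) · (1 − t)^μ = ∏_{j=1}^{i} (1 − (1 − t)^{l_j}) holds in the ring of formal power series with integer coefficients. (This is the combinatorial content of Proposition 3.11 of the paper, computing the Hilbert series of the summand N^{(v̄,l̄)} of the Morse complex of a tree, up to the grading shift t^i.) -/

import Mathlib

open PowerSeries Finset

-- card of functions with given sum
lemma aux_cardfun (α : Type*) [Fintype α] [DecidableEq α] (n : ℕ) :
    Nat.card {a : α → ℕ // ∑ k, a k = n} = (Fintype.card α + n - 1).choose n := by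
  rw [Nat.card_congr (Sym.equivNatSumOfFintype α n).symm, Nat.card_eq_fintype_card,
    Sym.card_sym_eq_choose]

-- GF lemma
lemma aux_gf (m : ℕ) :
    (PowerSeries.mk fun n => ((m + n - 1).choose n : ℤ)) * (1 - PowerSeries.X) ^ m = 1 := by
  cases m with
  | zero =>
    have : (PowerSeries.mk fun n => (((0:ℕ) + n - 1).choose n : ℤ)) = 1 := by
      ext n
      cases n with
      | zero => simp
      | succ k => simp [Nat.choose_eq_zero_of_lt (by omega : k + 1 - 1 < k + 1)]
    rw [this, pow_zero, one_mul]
  | succ d =>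
    have h : (PowerSeries.mk fun n => ((d + 1 + n - 1).choose n : ℤ))
        = PowerSeries.mk fun n => ((d + n).choose d : ℤ) := by
      ext n
      simp only [coeff_mk]
      congr 1
      rw [show d + 1 + n - 1 = d + n by omega, Nat.choose_symm_add]
    rw [h]
    exact_mod_cast PowerSeries.mk_add_choose_mul_one_sub_pow_eq_one ℤ d

-- card of functions with given sum vanishing on S
lemma aux_card_zero_on (μ n : ℕ) (S : Finset (Fin μ)) :
    Nat.card {a : Fin μ → ℕ // (∑ k, a k) = n ∧ ∀ k ∈ S, a k = 0}
      = (μ - S.card + n - 1).choose n := by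
  classical
  have e : {a : Fin μ → ℕ // (∑ k, a k) = n ∧ ∀ k ∈ S, a k = 0}
      ≃ {b : ↥(Sᶜ : Finset (Fin μ)) → ℕ // ∑ k, b k = n} := by
    refine
    { toFun := fun a => ⟨fun k => a.1 k, ?_⟩
      invFun := fun b => ⟨fun k => if h : k ∈ (Sᶜ : Finset (Fin μ)) then b.1 ⟨k, h⟩ else 0, ?_, ?_⟩
      left_inv := ?_
      right_inv := ?_ }
    · obtain ⟨a, ha, hz⟩ := a
      have h1 : ∑ k : ↥(Sᶜ : Finset (Fin μ)), a ↑k = ∑ k ∈ (Sᶜ : Finset (Fin μ)), a k :=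
        Finset.sum_attach _ _
      rw [h1, Finset.sum_subset (Finset.subset_univ _)]
      · exact ha
      · intro x _ hx
        exact hz x (by simpa using hx)
    · obtain ⟨b, hb⟩ := b
      rw [← Finset.sum_subset (Finset.subset_univ (Sᶜ : Finset (Fin μ)))
        (fun x _ hx => dif_neg hx)] at *
      rw [← Finset.sum_attach (Sᶜ : Finset (Fin μ))
        (fun k => if h : k ∈ (Sᶜ : Finset (Fin μ)) then b ⟨k, h⟩ else 0)]
      rw [← hb]
      exact Finset.sum_congr rfl fun x _ => dif_pos x.2
    · intro k hk
      exact dif_neg (by simpa using hk)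
    · rintro ⟨a, ha, hz⟩
      ext k
      simp only
      split
      · rfl
      · next h => exact (hz k (by simpa using h)).symm
    · rintro ⟨b, hb⟩
      ext k
      simp only [dif_pos k.2]
  rw [Nat.card_congr e, aux_cardfun]
  congr 2
  rw [Fintype.card_coe, Finset.card_compl, Fintype.card_fin]

lemma aux_ie (μ i n : ℕ) (B : Fin i → Finset (Fin μ)) :
    (Nat.card {a : Fin μ → ℕ // (∑ k, a k) = n ∧ ∀ j, ∃ k ∈ B j, 0 < a k} : ℤ)
      = ∑ T ∈ (Finset.univ : Finset (Fin i)).powerset, (-1 : ℤ) ^ T.card *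
          (Nat.card {a : Fin μ → ℕ // (∑ k, a k) = n ∧ ∀ k ∈ T.biUnion B, a k = 0} : ℤ) := by
  classical
  set A := Finset.piAntidiag (Finset.univ : Finset (Fin μ)) n with hA
  have hcount : ∀ (P : (Fin μ → ℕ) → Prop) (_ : DecidablePred P),
      Nat.card {a : Fin μ → ℕ // (∑ k, a k) = n ∧ P a} = (A.filter P).card := by
    intro P _
    rw [← Nat.card_eq_finsetCard]
    refine Nat.card_congr (Equiv.subtypeEquivRight ?_)
    intro a
    simp only [hA, Finset.mem_filter, Finset.mem_piAntidiag, Finset.mem_univ, imp_true_iff,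
      and_true]
  rw [hcount (fun a => ∀ j, ∃ k ∈ B j, 0 < a k) (by infer_instance)]
  have step1 : ∀ T ∈ (Finset.univ : Finset (Fin i)).powerset,
      (-1:ℤ)^T.card * (Nat.card {a : Fin μ → ℕ //
          (∑ k, a k) = n ∧ ∀ k ∈ T.biUnion B, a k = 0} : ℤ)
      = (-1:ℤ)^T.card * ((A.filter fun a => ∀ k ∈ T.biUnion B, a k = 0).card : ℤ) := by
    intro T _
    rw [hcount (fun a => ∀ k ∈ T.biUnion B, a k = 0) (by infer_instance)]
  rw [Finset.sum_congr rfl step1]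
  rw [← Finset.sum_boole]
  have step2 : ∀ T ∈ (Finset.univ : Finset (Fin i)).powerset,
      (-1:ℤ)^T.card * ((A.filter fun a => ∀ k ∈ T.biUnion B, a k = 0).card : ℤ)
      = ∑ a ∈ A, (-1:ℤ)^T.card * (if (∀ k ∈ T.biUnion B, a k = 0) then 1 else 0) := by
    intro T _
    rw [← Finset.sum_boole, Finset.mul_sum]
  rw [Finset.sum_congr rfl step2, Finset.sum_comm]
  refine Finset.sum_congr rfl fun a _ => ?_
  set Bd := Finset.univ.filter (fun j => ∀ k ∈ B j, a k = 0) with hBd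
  have h1 : ∀ T ∈ (Finset.univ : Finset (Fin i)).powerset,
      (-1:ℤ)^T.card * (if (∀ k ∈ T.biUnion B, a k = 0) then (1:ℤ) else 0)
      = if T ⊆ Bd then (-1:ℤ)^T.card else 0 := by
    intro T _
    by_cases h : ∀ k ∈ T.biUnion B, a k = 0
    · rw [if_pos h, mul_one, if_pos]
      intro j hj
      rw [hBd, Finset.mem_filter]
      exact ⟨Finset.mem_univ _, fun k hk => h k (Finset.mem_biUnion.2 ⟨j, hj, hk⟩)⟩
    · rw [if_neg h, mul_zero, if_neg]
      intro hT
      apply h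
      intro k hk
      obtain ⟨j, hj, hk'⟩ := Finset.mem_biUnion.1 hk
      have := hT hj
      rw [hBd, Finset.mem_filter] at this
      exact this.2 k hk'
  rw [Finset.sum_congr rfl h1]
  have h2 : ((Finset.univ : Finset (Fin i)).powerset.filter (· ⊆ Bd)) = Bd.powerset := by
    ext T
    simp [Finset.mem_powerset]
  rw [← Finset.sum_filter, h2, Finset.sum_powerset_neg_one_pow_card]
  have h3 : (Bd = ∅) ↔ (∀ j, ∃ k ∈ B j, 0 < a k) := by
    rw [hBd, Finset.filter_eq_empty_iff]
    constructor
    · intro h j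
      have := h (Finset.mem_univ j)
      push_neg at this
      obtain ⟨k, hk, hk0⟩ := this
      exact ⟨k, hk, Nat.pos_of_ne_zero hk0⟩
    · intro h j _
      obtain ⟨k, hk, hk0⟩ := h j
      intro hall
      exact absurd (hall k hk) (Nat.pos_iff_ne_zero.1 hk0)
  rw [if_congr h3 rfl rfl]



/-- With pairwise disjoint nonempty blocks `B_1, …, B_i ⊆ Fin μ` of sizes `l_j`,
and `c n` counting functions `a : Fin μ → ℕ` with `∑ a = n` hitting every block positively,
one has `(∑ c_n t^n) · (1 − t)^μ = ∏_j (1 − (1 − t)^{l_j})` in `ℤ⟦t⟧`. -/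
theorem stmt_4 (μ : ℕ) (hμ : 1 ≤ μ) (i : ℕ) (B : Fin i → Finset (Fin μ))
    (hB : ∀ j, (B j).Nonempty)
    (hdisj : ∀ j j', j ≠ j' → Disjoint (B j) (B j'))
    (c : ℕ → ℕ)
    (hc : ∀ n, c n =
      Nat.card {a : Fin μ → ℕ // (∑ k, a k) = n ∧ ∀ j, ∃ k ∈ B j, 0 < a k}) :
    (PowerSeries.mk fun n => (c n : ℤ)) * (1 - PowerSeries.X) ^ μ
      = ∏ j, (1 - (1 - PowerSeries.X) ^ (B j).card) := by
  classical
  have hLcard : ∀ T : Finset (Fin i), (T.biUnion B).card = ∑ j ∈ T, (B j).card :=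
    fun T => Finset.card_biUnion (fun j _ j' _ h => hdisj j j' h)
  have hLle : ∀ T : Finset (Fin i), ∑ j ∈ T, (B j).card ≤ μ := by
    intro T
    rw [← hLcard]
    calc (T.biUnion B).card ≤ (Finset.univ : Finset (Fin μ)).card := Finset.card_le_univ _
      _ = μ := by rw [Finset.card_univ, Fintype.card_fin]
  have hmk : (PowerSeries.mk fun n => (c n : ℤ))
      = ∑ T ∈ (Finset.univ : Finset (Fin i)).powerset,
          (-1:ℤ)^T.card •
            PowerSeries.mk (fun n => (((μ - ∑ j ∈ T, (B j).card) + n - 1).choose n : ℤ)) := by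
    ext n
    rw [map_sum]
    simp only [map_smul, PowerSeries.coeff_mk, smul_eq_mul]
    rw [hc n, aux_ie μ i n B]
    refine Finset.sum_congr rfl fun T _ => ?_
    rw [aux_card_zero_on, hLcard]
    simp only [map_zsmul, PowerSeries.coeff_mk, smul_eq_mul]
  rw [hmk, Finset.sum_mul]
  have hrhs : (∏ j, (1 - (1 - PowerSeries.X) ^ (B j).card))
      = ∏ j ∈ (Finset.univ : Finset (Fin i)),
          ((fun j => -(1 - PowerSeries.X) ^ (B j).card) j + (fun _ => (1:ℤ⟦X⟧)) j) :=
    Finset.prod_congr rfl fun j _ => (neg_add_eq_sub _ _).symm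
  rw [hrhs, Finset.prod_add]
  refine Finset.sum_congr rfl fun T hT => ?_
  have hpow : (1 - PowerSeries.X : ℤ⟦X⟧)^μ
      = (1 - PowerSeries.X)^(μ - ∑ j ∈ T, (B j).card)
        * (1 - PowerSeries.X)^(∑ j ∈ T, (B j).card) := by
    rw [← pow_add]
    congr 1
    have := hLle T
    omega
  rw [smul_mul_assoc, hpow, ← mul_assoc, aux_gf (μ - ∑ j ∈ T, (B j).card), one_mul,
    Finset.prod_const_one, mul_one]
  have hprodneg : ∏ j ∈ T, (-(1 - PowerSeries.X) ^ (B j).card)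
      = (-1:ℤ⟦X⟧)^T.card * ∏ j ∈ T, (1 - PowerSeries.X) ^ (B j).card := by
    rw [← Finset.prod_const (-1 : ℤ⟦X⟧), ← Finset.prod_mul_distrib]
    exact Finset.prod_congr rfl fun j _ => by ring
  rw [hprodneg, ← Finset.prod_pow_eq_pow_sum, zsmul_eq_mul]
  push_cast
  ring
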